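/- Let E be a real inner product space, τ > 0, and c^u, c^a ∈ E nonzero. Define g(x) := exp(τ·cos(x,c^u)) / (exp(τ·cos(x,c^u)) + exp(τ·cos(x,c^a))) for x ≠ 0, where cos(x,c) := ⟪x, c⟫ / (‖x‖ · ‖c‖). Then g is differentiable at every nonzero x ∈ E, and the norm of its gradient at x is at most τ / (2‖x‖). -/

import Mathlib

set_option synthInstance.maxHeartbeats 1000000
set_option maxHeartbeats 1000000

/-- Cosine similarity of two vectors in a real inner product space. -/
noncomputable def cosSim {E : Type*} [NormedAddCommGroup E] [InnerProductSpace ℝ E]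
    (x c : E) : ℝ :=
  (inner ℝ x c : ℝ) / (‖x‖ * ‖c‖)

/-- The Espresso confidence function
`g(x) = exp(τ·cos(x,cᵘ)) / (exp(τ·cos(x,cᵘ)) + exp(τ·cos(x,cᵃ)))`. -/
noncomputable def espressoG {E : Type*} [NormedAddCommGroup E] [InnerProductSpace ℝ E]
    (τ : ℝ) (cu ca : E) (x : E) : ℝ :=
  Real.exp (τ * cosSim x cu) /
    (Real.exp (τ * cosSim x cu) + Real.exp (τ * cosSim x ca))

noncomputable def cosGradVec {E : Type*} [NormedAddCommGroup E] [InnerProductSpace ℝ E]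
    (x c : E) : E :=
  ((‖x‖ * ‖c‖)⁻¹) • c - (((inner ℝ x c : ℝ)) / (‖x‖ ^ 3 * ‖c‖)) • x

lemma hasFDerivAt_norm' {E : Type*} [NormedAddCommGroup E] [InnerProductSpace ℝ E]
    {x : E} (hx : x ≠ 0) :
    HasFDerivAt (fun y : E => ‖y‖) ((‖x‖⁻¹ : ℝ) • innerSL ℝ x) x := by
  have hsq : HasFDerivAt (fun y : E => ‖y‖ ^ 2) (2 • (innerSL ℝ x)) x :=
    (hasStrictFDerivAt_norm_sq x).hasFDerivAt
  have h0 : ‖x‖ ^ 2 ≠ 0 := pow_ne_zero 2 (norm_ne_zero_iff.mpr hx)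
  have := hsq.sqrt h0
  have heq : (fun y : E => Real.sqrt (‖y‖ ^ 2)) = fun y : E => ‖y‖ := by
    funext y; rw [Real.sqrt_sq (norm_nonneg y)]
  rw [heq] at this
  convert this using 1
  rw [Real.sqrt_sq (norm_nonneg x)]
  ext v
  have hxn : ‖x‖ ≠ 0 := norm_ne_zero_iff.mpr hx
  simp [smul_smul]
  field_simp

lemma hasFDerivAt_cosSim {E : Type*} [NormedAddCommGroup E] [InnerProductSpace ℝ E]
    {x : E} (c : E) (hx : x ≠ 0) (hc : c ≠ 0) :
    HasFDerivAt (fun y : E => cosSim y c) (innerSL ℝ (cosGradVec x c)) x := by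
  have hxn : ‖x‖ ≠ 0 := norm_ne_zero_iff.mpr hx
  have hcn : ‖c‖ ≠ 0 := norm_ne_zero_iff.mpr hc
  have hN : HasFDerivAt (fun y : E => (inner ℝ y c : ℝ)) (innerSL ℝ c) x := by
    have : (fun y : E => (inner ℝ y c : ℝ)) = ⇑(innerSL ℝ c) := by
      funext y; simp [real_inner_comm]
    rw [this]; exact (innerSL ℝ c).hasFDerivAt
  have hD : HasFDerivAt (fun y : E => ‖y‖ * ‖c‖) (‖c‖ • ((‖x‖⁻¹ : ℝ) • innerSL ℝ x)) x :=
    (hasFDerivAt_norm' hx).mul_const ‖c‖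
  have hDne : ‖x‖ * ‖c‖ ≠ 0 := mul_ne_zero hxn hcn
  have hInv : HasFDerivAt (fun y : E => (‖y‖ * ‖c‖)⁻¹)
      ((-((‖x‖ * ‖c‖) ^ 2)⁻¹) • (‖c‖ • ((‖x‖⁻¹ : ℝ) • innerSL ℝ x))) x :=
    (hasDerivAt_inv hDne).comp_hasFDerivAt x hD
  have hmul : HasFDerivAt (fun y : E => (inner ℝ y c : ℝ) * (‖y‖ * ‖c‖)⁻¹) _ x := hN.mul hInv
  have hfun : (fun y : E => cosSim y c) =
      fun y : E => (inner ℝ y c : ℝ) * (‖y‖ * ‖c‖)⁻¹ := by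
    funext y; rw [cosSim, div_eq_mul_inv]
  rw [hfun]
  refine hmul.congr_fderiv ?_
  ext v
  simp only [cosGradVec, ContinuousLinearMap.add_apply, ContinuousLinearMap.smul_apply,
    innerSL_apply_apply, inner_sub_left, real_inner_smul_left, smul_eq_mul]
  field_simp
  ring

lemma norm_cosGradVec_le {E : Type*} [NormedAddCommGroup E] [InnerProductSpace ℝ E]
    {x : E} (c : E) (hx : x ≠ 0) (hc : c ≠ 0) :
    ‖cosGradVec x c‖ ≤ ‖x‖⁻¹ := by
  have hxn : (0:ℝ) < ‖x‖ := norm_pos_iff.mpr hx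
  have hcn : (0:ℝ) < ‖c‖ := norm_pos_iff.mpr hc
  have key : ‖cosGradVec x c‖ ^ 2 ≤ (‖x‖⁻¹) ^ 2 := by
    rw [cosGradVec, norm_sub_sq_real, norm_smul, norm_smul, real_inner_smul_left,
      real_inner_smul_right]
    first
      | rw [real_inner_comm c x]
      | rw [real_inner_comm x c]
      | skip
    simp only [Real.norm_eq_abs, mul_pow, sq_abs]
    have h1 : ‖x‖ ≠ 0 := ne_of_gt hxn
    have h2 : ‖c‖ ≠ 0 := ne_of_gt hcn
    have h3 : (inner ℝ c x : ℝ) ^ 2 ≥ 0 := sq_nonneg _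
    field_simp
    nlinarith [mul_nonneg h3 (show (0:ℝ) ≤ ‖x‖ ^ 10 * ‖c‖ ^ 4 by positivity),
      sq_nonneg (inner ℝ c x : ℝ)]
  nlinarith [norm_nonneg (cosGradVec x c), inv_pos.mpr hxn]

lemma norm_smul_clm {E : Type*} [NormedAddCommGroup E] [InnerProductSpace ℝ E]
    (r : ℝ) (f : E →L[ℝ] ℝ) : ‖r • f‖ = |r| * ‖f‖ := by
  rw [show |r| = ‖r‖ from rfl]; exact norm_smul r f

theorem espresso_gradient_bound
    {E : Type*} [NormedAddCommGroup E] [InnerProductSpace ℝ E] [CompleteSpace E]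
    (τ : ℝ) (hτ : 0 < τ) (cu ca : E) (hcu : cu ≠ 0) (hca : ca ≠ 0)
    (x : E) (hx : x ≠ 0) :
    DifferentiableAt ℝ (espressoG τ cu ca) x ∧
    ‖gradient (espressoG τ cu ca) x‖ ≤ τ / (2 * ‖x‖) := by
  have hxn : (0:ℝ) < ‖x‖ := norm_pos_iff.mpr hx
  -- rewrite espressoG as sigmoid ∘ difference
  have hEq : espressoG τ cu ca =
      (fun t : ℝ => (1 + Real.exp (-t))⁻¹) ∘
        (fun y : E => τ * cosSim y cu - τ * cosSim y ca) := by
    funext y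
    simp only [espressoG, Function.comp]
    rw [neg_sub, Real.exp_sub]
    have h1 : Real.exp (τ * cosSim y cu) > 0 := Real.exp_pos _
    have h2 : Real.exp (τ * cosSim y ca) > 0 := Real.exp_pos _
    field_simp
  -- derivative of inner function
  set L : E →L[ℝ] ℝ := τ • innerSL ℝ (cosGradVec x cu) - τ • innerSL ℝ (cosGradVec x ca)
    with hL
  have hInner : HasFDerivAt (fun y : E => τ * cosSim y cu - τ * cosSim y ca) L x := by
    exact ((hasFDerivAt_cosSim cu hx hcu).const_mul τ).sub
      ((hasFDerivAt_cosSim ca hx hca).const_mul τ)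
  -- derivative of sigmoid
  set u : ℝ := τ * cosSim x cu - τ * cosSim x ca with hu
  have hexp : HasDerivAt (fun t : ℝ => Real.exp (-t)) (-Real.exp (-u)) u := by
    have h := (hasDerivAt_neg u).exp
    convert h using 1
    ring
  have hpos : (0:ℝ) < 1 + Real.exp (-u) := by positivity
  have hσ : HasDerivAt (fun t : ℝ => (1 + Real.exp (-t))⁻¹)
      (Real.exp (-u) / (1 + Real.exp (-u))^2) u := by
    have : HasDerivAt (fun t : ℝ => (1 + Real.exp (-t))⁻¹) _ u := ((hexp.const_add 1).inv (ne_of_gt hpos))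
    convert this using 1
    ring
  have H : HasFDerivAt (espressoG τ cu ca)
      ((Real.exp (-u) / (1 + Real.exp (-u))^2) • L) x := by
    rw [hEq]
    exact hσ.comp_hasFDerivAt x hInner
  refine ⟨H.differentiableAt, ?_⟩
  have hgrad : gradient (espressoG τ cu ca) x =
      (InnerProductSpace.toDual ℝ E).symm ((Real.exp (-u) / (1 + Real.exp (-u))^2) • L) := by
    rw [gradient, H.fderiv]
  rw [hgrad, LinearIsometryEquiv.norm_map]
  -- norm bounds
  have hLu : ‖innerSL ℝ (cosGradVec x cu)‖ ≤ ‖x‖⁻¹ := by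
    rw [innerSL_apply_norm]; exact norm_cosGradVec_le cu hx hcu
  have hLa : ‖innerSL ℝ (cosGradVec x ca)‖ ≤ ‖x‖⁻¹ := by
    rw [innerSL_apply_norm]; exact norm_cosGradVec_le ca hx hca
  have hLnorm : ‖L‖ ≤ 2 * τ * ‖x‖⁻¹ := by
    calc ‖L‖ ≤ ‖τ • innerSL ℝ (cosGradVec x cu)‖ + ‖τ • innerSL ℝ (cosGradVec x ca)‖ :=
          norm_sub_le _ _
      _ = τ * ‖innerSL ℝ (cosGradVec x cu)‖ + τ * ‖innerSL ℝ (cosGradVec x ca)‖ := by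
          rw [norm_smul_clm, norm_smul_clm, abs_of_pos hτ]
      _ ≤ τ * ‖x‖⁻¹ + τ * ‖x‖⁻¹ := by
          gcongr
      _ = 2 * τ * ‖x‖⁻¹ := by ring
  have hσbound : Real.exp (-u) / (1 + Real.exp (-u))^2 ≤ 1/4 := by
    have he : (0:ℝ) < Real.exp (-u) := Real.exp_pos _
    rw [div_le_iff₀ (by positivity)]
    nlinarith [sq_nonneg (1 - Real.exp (-u))]
  have hσnn : (0:ℝ) ≤ Real.exp (-u) / (1 + Real.exp (-u))^2 := by positivity
  calc ‖(Real.exp (-u) / (1 + Real.exp (-u))^2) • L‖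
      = (Real.exp (-u) / (1 + Real.exp (-u))^2) * ‖L‖ := by
        rw [norm_smul_clm, abs_of_nonneg hσnn]
    _ ≤ (1/4) * (2 * τ * ‖x‖⁻¹) := by
        apply mul_le_mul hσbound hLnorm (norm_nonneg L) (by norm_num)
    _ = τ / (2 * ‖x‖) := by field_simp; ring
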